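/- (Quotient rule) Let 0 < α ≤ 1, β > 0, t > 0, and let f, g be α-differentiable at t in the sense of the local M-derivative, with g(t) ≠ 0 and g continuous at t. Then f/g is α-differentiable at t and 𝒟_M^{α,β}(f/g)(t) = [g(t)·𝒟_M^{α,β} f(t) − f(t)·𝒟_M^{α,β} g(t)] / [g(t)]². -/

import Mathlib

open Filter Topology

/-- One-parameter Mittag-Leffler function `E_β(x) = ∑_{k=0}^∞ x^k / Γ(βk+1)`. -/
noncomputable def mittagLeffler (β x : ℝ) : ℝ :=
  ∑' k : ℕ, x ^ k / Real.Gamma (β * k + 1)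

/-- `f` has local M-derivative `L` of order `α` with parameter `β` at `t`, i.e.
`lim_{ε→0} (f (t · E_β (ε t^{-α})) - f t)/ε = L`. -/
def HasLocalMDerivAt (α β : ℝ) (f : ℝ → ℝ) (t L : ℝ) : Prop :=
  Tendsto (fun ε : ℝ => (f (t * mittagLeffler β (ε * t ^ (-α))) - f t) / ε)
    (𝓝[≠] (0 : ℝ)) (𝓝 L)

/-- Quotient rule. -/
theorem stmt3 (α β t : ℝ) (hα0 : 0 < α) (hα1 : α ≤ 1) (hβ : 0 < β) (ht : 0 < t)
    (f g : ℝ → ℝ) (Lf Lg : ℝ)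
    (hf : HasLocalMDerivAt α β f t Lf) (hg : HasLocalMDerivAt α β g t Lg)
    (hgt : g t ≠ 0) (hgc : ContinuousAt g t) :
    HasLocalMDerivAt α β (fun x => f x / g x) t
      ((g t * Lf - f t * Lg) / (g t) ^ 2) := by
  set u : ℝ → ℝ := fun ε => t * mittagLeffler β (ε * t ^ (-α)) with hu
  have hne : ∀ᶠ ε in 𝓝[≠] (0:ℝ), ε ≠ 0 := eventually_mem_nhdsWithin
  have hεto : Tendsto (fun ε : ℝ => ε) (𝓝[≠] (0:ℝ)) (𝓝 0) :=
    tendsto_id.mono_left nhdsWithin_le_nhds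
  have hgu : Tendsto (fun ε => g (u ε)) (𝓝[≠] (0:ℝ)) (𝓝 (g t)) := by
    have h1 : Tendsto (fun ε => g t + ε * ((g (u ε) - g t) / ε)) (𝓝[≠] (0:ℝ))
        (𝓝 (g t + 0 * Lg)) := tendsto_const_nhds.add (hεto.mul hg)
    rw [zero_mul, add_zero] at h1
    refine h1.congr' ?_
    filter_upwards [hne] with ε hε
    field_simp
    ring
  have hgune : ∀ᶠ ε in 𝓝[≠] (0:ℝ), g (u ε) ≠ 0 := hgu.eventually_ne hgt
  have key : Tendsto
      (fun ε => ((f (u ε) - f t) / ε * g t - f t * ((g (u ε) - g t) / ε)) / (g (u ε) * g t))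
      (𝓝[≠] (0:ℝ)) (𝓝 ((Lf * g t - f t * Lg) / (g t * g t))) :=
    ((hf.mul tendsto_const_nhds).sub (tendsto_const_nhds.mul hg)).div
      (hgu.mul tendsto_const_nhds) (mul_ne_zero hgt hgt)
  have heq : (g t * Lf - f t * Lg) / (g t) ^ 2 = (Lf * g t - f t * Lg) / (g t * g t) := by
    rw [sq]; ring_nf
  rw [HasLocalMDerivAt, heq]
  refine key.congr' ?_
  filter_upwards [hne, hgune] with ε hε hgune
  simp only [hu] at hgune ⊢
  field_simp
  ring
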